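/- For every integer m ≥ 1, the unique decompositions 4m−1 = s^{(2)}_{k(4m−1)} + 2·s^{(2)}_{l(4m−1)} and 4m+1 = s^{(2)}_{k(4m+1)} + 2·s^{(2)}_{l(4m+1)} satisfy l(4m+1) = l(4m−1) and k(4m+1) = k(4m−1) + 1. -/

import Mathlib

/-- Moser function `m_r(n)`: reinterpret the base-`r` digits of `n` as base-`r²` digits,
i.e. `m_r(n) = Σ_i ν_i r^(2i)` where `n = Σ_i ν_i r^i` is the base-`r` expansion. -/
def moser (r n : ℕ) : ℕ := Nat.ofDigits (r ^ 2) (Nat.digits r n)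

/-- `s^(r)_n = r · m_r(n−1) + 1` for `n ≥ 1`. -/
def moserS (r n : ℕ) : ℕ := r * moser r (n - 1) + 1

/-- The `i`-th base-`r` digit of `n` (0 if beyond the expansion). -/
def dig (r n i : ℕ) : ℕ := (Nat.digits r n).getD i 0

/-- Josephus–Groër survivor function: with `M = N` if `N` is odd, `M = N − 1` otherwise,
and `M = Σ_j b_j 2^j` the binary expansion, `W(N) = 1 + Σ_{j odd} b_j 2^j`. -/
def W (N : ℕ) : ℕ :=
  let M := if N % 2 = 1 then N else N - 1
  1 + ((((Nat.digits 2 M).zipIdx.map Prod.swap).filter (fun p => p.1 % 2 = 1)).map (fun p => p.2 * 2 ^ p.1)).sum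


lemma moser_rec (n : ℕ) : moser 2 n = n % 2 + 4 * moser 2 (n / 2) := by
  rcases Nat.eq_zero_or_pos n with h | h
  · subst h; simp [moser]
  · unfold moser
    rw [Nat.digits_def' (by norm_num : 1 < 2) h, Nat.ofDigits_cons]
    norm_num

lemma le_moser (n : ℕ) : n ≤ moser 2 n := by
  induction n using Nat.strong_induction_on with
  | _ n ih =>
    rcases Nat.eq_zero_or_pos n with h | h
    · simp [h, moser]
    · have h1 : n / 2 < n := Nat.div_lt_self h (by norm_num)
      have := ih (n/2) h1
      have := moser_rec n
      omega

lemma moser_uniq : ∀ n a b a' b', moser 2 a + 2 * moser 2 b = n →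
    moser 2 a' + 2 * moser 2 b' = n → a = a' ∧ b = b' := by
  intro n
  induction n using Nat.strong_induction_on with
  | _ n ih =>
    intro a b a' b' h h'
    rcases Nat.eq_zero_or_pos n with h0 | h0
    · have := le_moser a; have := le_moser b; have := le_moser a'; have := le_moser b'
      omega
    · have ra := moser_rec a; have rb := moser_rec b
      have ra' := moser_rec a'; have rb' := moser_rec b'
      have hlt : n / 4 < n := Nat.div_lt_self h0 (by norm_num)
      have e1 : moser 2 (a/2) + 2 * moser 2 (b/2) = n / 4 := by omega
      have e2 : moser 2 (a'/2) + 2 * moser 2 (b'/2) = n / 4 := by omega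
      obtain ⟨ea, eb⟩ := ih (n/4) hlt _ _ _ _ e1 e2
      omega

/-- For every `m ≥ 1`, the (unique) decompositions
`4m−1 = s^(2)_{k₁} + 2·s^(2)_{l₁}` and `4m+1 = s^(2)_{k₂} + 2·s^(2)_{l₂}`
satisfy `l₂ = l₁` and `k₂ = k₁ + 1`. -/
theorem indices_of_consecutive_odd (m : ℕ) (hm : 1 ≤ m)
    (k₁ l₁ k₂ l₂ : ℕ) (hk₁ : 1 ≤ k₁) (hl₁ : 1 ≤ l₁) (hk₂ : 1 ≤ k₂) (hl₂ : 1 ≤ l₂)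
    (h₁ : 4 * m - 1 = moserS 2 k₁ + 2 * moserS 2 l₁)
    (h₂ : 4 * m + 1 = moserS 2 k₂ + 2 * moserS 2 l₂) :
    l₂ = l₁ ∧ k₂ = k₁ + 1 := by
  have E1 : moser 2 (k₁-1) + 2 * moser 2 (l₁-1) + 2 = 2 * m := by
    unfold moserS at h₁; omega
  have E2 : moser 2 (k₂-1) + 2 * moser 2 (l₂-1) + 1 = 2 * m := by
    unfold moserS at h₂; omega
  have r1 := moser_rec (k₁-1)
  have hpar : (k₁-1) % 2 = 0 := by
    have rb := moser_rec (l₁-1)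
    omega
  have r2 := moser_rec (k₁-1+1)
  have hd : (k₁-1+1)/2 = (k₁-1)/2 := by omega
  rw [hd] at r2
  have key : moser 2 (k₂-1) + 2 * moser 2 (l₂-1) = 2*m - 1 := by omega
  have key' : moser 2 (k₁-1+1) + 2 * moser 2 (l₁-1) = 2*m - 1 := by omega
  obtain ⟨ea, eb⟩ := moser_uniq (2*m-1) _ _ _ _ key key'
  omega
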